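/- (Stationarity condition is independent of burst sizes.) Fix x̄ ∈ (0,∞)^n and N with N_i ≥ 1 for all i, and define f(λ) = λ / X(λ x̄, N) for λ > 0. Then f'(λ) = 0 if and only if h(λ x̄) = 1. -/

import Mathlib

open Finset

noncomputable def Xfun (n : ℕ) (a : ℝ) (x N : Fin n → ℝ) : ℝ :=
  a + (∑ k, (N k - 1) * x k) + (∏ k, (1 + x k)) - 1

noncomputable def hfun (n : ℕ) (a : ℝ) (x : Fin n → ℝ) : ℝ :=
  (∑ i, x i / (1 + x i)) + (1 - a) / ∏ j, (1 + x j)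

theorem stmt9 (n : ℕ) (hn : 2 ≤ n) (a : ℝ) (ha0 : 0 < a) (ha1 : a < 1)
    (L : Fin n → ℝ) (hL : ∀ i, 0 < L i)
    (xb : Fin n → ℝ) (hxb : ∀ i, 0 < xb i)
    (N : Fin n → ℝ) (hN : ∀ i, 1 ≤ N i)
    (lam : ℝ) (hlam : 0 < lam) :
    deriv (fun t : ℝ => t / Xfun n a (t • xb) N) lam = 0 ↔
      hfun n a (lam • xb) = 1 := by
  classical
  set P : ℝ := ∏ k, (1 + lam * xb k) with hPdef
  set S : ℝ := ∑ k, (N k - 1) * xb k with hSdef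
  set T : ℝ := ∑ i, (lam * xb i) / (1 + lam * xb i) with hTdef
  have hpos : ∀ k, (0:ℝ) < 1 + lam * xb k := fun k => by
    have := mul_pos hlam (hxb k); linarith
  have hPpos : 0 < P := Finset.prod_pos fun k _ => hpos k
  have hP1 : (1:ℝ) ≤ P := by
    calc (1:ℝ) = ∏ _k : Fin n, (1:ℝ) := by simp
    _ ≤ P := Finset.prod_le_prod (fun i _ => by norm_num)
        (fun i _ => by have := mul_pos hlam (hxb i); linarith)
  have hSnn : 0 ≤ S := Finset.sum_nonneg fun k _ =>
    mul_nonneg (by linarith [hN k]) (hxb k).le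
  -- value of X at lam
  have hX : Xfun n a (lam • xb) N = a + lam * S + P - 1 := by
    simp only [Xfun, Pi.smul_apply, smul_eq_mul, hSdef, Finset.mul_sum]
    congr 1
    congr 1
    congr 1
    exact Finset.sum_congr rfl fun k _ => by ring
  have hXpos : 0 < Xfun n a (lam • xb) N := by
    rw [hX]
    have := mul_nonneg hlam.le hSnn
    linarith
  -- derivative of X along t ↦ t • xb
  set D : ℝ := S + ∑ i, (∏ j ∈ Finset.univ.erase i, (1 + lam * xb j)) * xb i with hDdef
  have h1 : HasDerivAt (fun t : ℝ => ∑ k, (N k - 1) * (t * xb k)) S lam := by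
    rw [hSdef]
    exact HasDerivAt.fun_sum fun k _ =>
      ((hasDerivAt_mul_const (xb k)).const_mul (N k - 1))
  have h2 : HasDerivAt (fun t : ℝ => ∏ k, (1 + t * xb k))
      (∑ i, (∏ j ∈ Finset.univ.erase i, (1 + lam * xb j)) * xb i) lam := by
    have := HasDerivAt.fun_finsetProd (u := Finset.univ)
      (f := fun (k : Fin n) (t : ℝ) => 1 + t * xb k) (f' := fun k => xb k) (x := lam)
      (fun i _ => (hasDerivAt_mul_const (xb i)).const_add 1)
    simpa using this
  have hXd : HasDerivAt (fun t : ℝ => Xfun n a (t • xb) N) D lam := by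
    have : HasDerivAt (fun t : ℝ =>
        a + (∑ k, (N k - 1) * (t * xb k)) + (∏ k, (1 + t * xb k)) - 1) D lam := by
      rw [hDdef]
      exact ((h1.const_add a).add h2).sub_const 1
    simpa only [Xfun, Pi.smul_apply, smul_eq_mul] using this
  have hf : HasDerivAt (fun t : ℝ => t / Xfun n a (t • xb) N)
      ((1 * Xfun n a (lam • xb) N - lam * D) / (Xfun n a (lam • xb) N) ^ 2) lam :=
    (hasDerivAt_id lam).div hXd hXpos.ne'
  rw [hf.deriv]
  -- key algebraic identity
  have key : lam * (∑ i, (∏ j ∈ Finset.univ.erase i, (1 + lam * xb j)) * xb i) = T * P := by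
    rw [hTdef, Finset.sum_mul, Finset.mul_sum]
    refine Finset.sum_congr rfl fun i _ => ?_
    have hPi : P = (1 + lam * xb i) * ∏ j ∈ Finset.univ.erase i, (1 + lam * xb j) :=
      (Finset.mul_prod_erase Finset.univ _ (Finset.mem_univ i)).symm
    rw [hPi, div_mul_eq_mul_div, eq_div_iff (hpos i).ne']
    ring
  have hfun_eq : hfun n a (lam • xb) = T + (1 - a) / P := by
    simp only [hfun, Pi.smul_apply, smul_eq_mul, hTdef, hPdef]
  constructor
  · intro h
    have hnum : 1 * Xfun n a (lam • xb) N - lam * D = 0 := by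
      rcases div_eq_zero_iff.mp h with h' | h'
      · exact h'
      · exact absurd h' (pow_ne_zero 2 hXpos.ne')
    have hkey : a + P - 1 = T * P := by
      rw [hX, hDdef, mul_add, key] at hnum
      linarith
    rw [hfun_eq]
    have : (1 - a) / P = 1 - T := by
      rw [div_eq_iff hPpos.ne']
      linear_combination -hkey
    rw [this]; ring
  · intro h
    rw [hfun_eq] at h
    have h2 : (1 - a) / P = 1 - T := by linarith
    have h3 : (1 - a) = (1 - T) * P := (div_eq_iff hPpos.ne').mp h2
    have hnum : 1 * Xfun n a (lam • xb) N - lam * D = 0 := by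
      rw [hX, hDdef, mul_add, key]
      linear_combination -h3
    rw [hnum, zero_div]
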